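/- Let A and B be finite connected graphs. If the Cartesian product A□B is generalized t-edge distance-balanced, then for every edge a₁a₂ ∈ E(A), either m_{a₁}(a₁a₂)·|V(B)| + n_{a₁}(a₁a₂)·|E(B)| = t·(m_{a₂}(a₁a₂)·|V(B)| + n_{a₂}(a₁a₂)·|E(B)|) or the symmetric equality holds. -/

import Mathlib

open SimpleGraph Finset

/-- Distance from a vertex to an edge: the minimum distance to its endpoints. -/
noncomputable def edgeDist {V : Type*} (G : SimpleGraph V) (v : V) (e : Sym2 V) : ℕ :=
  Sym2.lift ⟨fun x y => min (G.dist v x) (G.dist v y), fun _ _ => min_comm _ _⟩ e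

/-- Number of edges strictly closer to `α` than to `β`. -/
noncomputable def mCount {V : Type*} (G : SimpleGraph V) (α β : V) : ℕ :=
  {e ∈ G.edgeSet | edgeDist G α e < edgeDist G β e}.ncard

/-- Number of vertices strictly closer to `α` than to `β`. -/
noncomputable def nCount {V : Type*} (G : SimpleGraph V) (α β : V) : ℕ :=
  {w : V | G.dist w α < G.dist w β}.ncard

/-- Number of edges other than `αβ` itself equidistant from `α` and `β`. -/
noncomputable def m0Count {V : Type*} (G : SimpleGraph V) (α β : V) : ℕ :=
  {e ∈ G.edgeSet | e ≠ s(α, β) ∧ edgeDist G α e = edgeDist G β e}.ncard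

/-- The distance-partition class `D'^i_j(αβ)`: edges at distance `i` from `α`
and `j` from `β`. -/
def Dset {V : Type*} (G : SimpleGraph V) (α β : V) (i j : ℕ) : Set (Sym2 V) :=
  {e ∈ G.edgeSet | edgeDist G α e = i ∧ edgeDist G β e = j}

/-- Generalized t-edge distance-balanced graph. -/
def GtEDB {V : Type*} (G : SimpleGraph V) (t : ℕ) : Prop :=
  ∀ α β : V, G.Adj α β →
    mCount G α β = t * mCount G β α ∨ mCount G β α = t * mCount G α β

/-- The lexicographic product of two simple graphs. -/
def lexProd {V W : Type*} (A : SimpleGraph V) (B : SimpleGraph W) :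
    SimpleGraph (V × W) where
  Adj p q := A.Adj p.1 q.1 ∨ (p.1 = q.1 ∧ B.Adj p.2 q.2)
  symm := by
    refine ⟨?_⟩
    rintro p q (h | ⟨h1, h2⟩)
    · exact Or.inl h.symm
    · exact Or.inr ⟨h1.symm, h2.symm⟩
  loopless := by
    refine ⟨?_⟩
    rintro p (h | ⟨_, h⟩)
    · exact A.loopless.irrefl _ h
    · exact B.loopless.irrefl _ h
section Aux

variable {α β : Type*} {G : SimpleGraph α} {H : SimpleGraph β}

lemma walk_cast_length {a a' c : α} (h : a = a') (w : G.Walk a' c) :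
    (h ▸ w : G.Walk a c).length = w.length := by subst h; rfl

lemma len_proj_le [DecidableEq α] [DecidableEq β] [DecidableRel G.Adj] [DecidableRel H.Adj]
    {x y : α × β} (w : (G □ H).Walk x y) :
    w.ofBoxProdLeft.length + w.ofBoxProdRight.length ≤ w.length := by
  induction w with
  | nil => simp [Walk.ofBoxProdLeft, Walk.ofBoxProdRight]
  | @cons x y' z h w ih =>
    obtain ⟨x1, x2⟩ := x
    obtain ⟨y1, y2⟩ := y'
    by_cases hG : G.Adj x1 y1 ∧ x2 = y2
    · obtain ⟨hadj, heq⟩ := hG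
      subst heq
      have hH : ¬ (H.Adj x2 x2 ∧ x1 = y1) := by
        rintro ⟨hh, -⟩; exact H.irrefl hh
      rw [Walk.ofBoxProdLeft, Walk.ofBoxProdRight]
      dsimp only [Or.by_cases]
      rw [dif_pos ⟨hadj, rfl⟩, dif_neg hH]
      show w.ofBoxProdLeft.length + 1 + w.ofBoxProdRight.length ≤ w.length + 1
      omega
    · obtain ⟨hadjH, heq⟩ := h.resolve_left hG
      subst heq
      rw [Walk.ofBoxProdLeft, Walk.ofBoxProdRight]
      dsimp only [Or.by_cases]
      rw [dif_neg hG, dif_pos ⟨hadjH, rfl⟩]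
      show w.ofBoxProdLeft.length + (w.ofBoxProdRight.length + 1) ≤ w.length + 1
      omega

lemma boxProd_dist (hG : G.Connected) (hH : H.Connected) (x y : α × β) :
    (G □ H).dist x y = G.dist x.1 y.1 + H.dist x.2 y.2 := by
  classical
  obtain ⟨a, b⟩ := x
  obtain ⟨a', b'⟩ := y
  apply le_antisymm
  · obtain ⟨w1, hw1⟩ := hG.exists_walk_length_eq_dist a a'
    obtain ⟨w2, hw2⟩ := hH.exists_walk_length_eq_dist b b'
    calc (G □ H).dist (a, b) (a', b')
        ≤ ((w1.boxProdLeft H b).append (w2.boxProdRight G a')).length := dist_le _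
      _ = _ := by
          rw [Walk.length_append]
          exact congrArg₂ (· + ·) ((Walk.length_map _ _).trans hw1) ((Walk.length_map _ _).trans hw2)
  · obtain ⟨w, hw⟩ := (hG.boxProd hH).exists_walk_length_eq_dist (a, b) (a', b')
    calc G.dist a a' + H.dist b b'
        ≤ w.ofBoxProdLeft.length + w.ofBoxProdRight.length :=
          Nat.add_le_add (dist_le _) (dist_le _)
      _ ≤ w.length := len_proj_le w
      _ = _ := hw

@[simp] lemma edgeDist_mk (v x y : α) :
    edgeDist G v s(x, y) = min (G.dist v x) (G.dist v y) := rfl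

lemma edgeDist_boxProd_left (hG : G.Connected) (hH : H.Connected)
    (a : α) (b w : β) (e : Sym2 α) :
    edgeDist (G □ H) (a, b) (Sym2.map (fun v => (v, w)) e)
      = edgeDist G a e + H.dist b w := by
  induction e using Sym2.ind with
  | _ x y =>
    simp [Sym2.map_pair_eq, boxProd_dist hG hH, Nat.add_min_add_right]

lemma edgeDist_boxProd_right (hG : G.Connected) (hH : H.Connected)
    (a x : α) (b : β) (f : Sym2 β) :
    edgeDist (G □ H) (a, b) (Sym2.map (fun u => (x, u)) f)
      = G.dist a x + edgeDist H b f := by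
  induction f using Sym2.ind with
  | _ u v =>
    simp [Sym2.map_pair_eq, boxProd_dist hG hH, Nat.add_min_add_left]

lemma phiA_inj : Function.Injective
    (fun p : Sym2 α × β => Sym2.map (fun v => (v, p.2)) p.1) := by
  rintro ⟨e, w⟩ ⟨e', w'⟩ h
  simp only at h
  induction e using Sym2.ind with
  | _ x y =>
    induction e' using Sym2.ind with
    | _ x' y' =>
      simp only [Sym2.map_pair_eq, Sym2.eq_iff, Prod.mk.injEq] at h
      rcases h with ⟨⟨h1, h2⟩, ⟨h3, h4⟩⟩ | ⟨⟨h1, h2⟩, ⟨h3, h4⟩⟩ <;>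
        subst h1 <;> subst h2 <;> subst h3 <;>
        simp [Sym2.eq_swap]

lemma phiB_inj : Function.Injective
    (fun p : α × Sym2 β => Sym2.map (fun u => (p.1, u)) p.2) := by
  rintro ⟨x, f⟩ ⟨x', f'⟩ h
  simp only at h
  induction f using Sym2.ind with
  | _ u v =>
    induction f' using Sym2.ind with
    | _ u' v' =>
      simp only [Sym2.map_pair_eq, Sym2.eq_iff, Prod.mk.injEq] at h
      rcases h with ⟨⟨h1, h2⟩, ⟨h3, h4⟩⟩ | ⟨⟨h1, h2⟩, ⟨h3, h4⟩⟩ <;>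
        subst h1 <;> subst h2 <;> subst h4 <;>
        simp [Sym2.eq_swap]

lemma ncard_prod' {X Y : Type*} (s : Set X) (t : Set Y) :
    (s ×ˢ t).ncard = s.ncard * t.ncard := by
  rw [← Nat.card_coe_set_eq, ← Nat.card_coe_set_eq, ← Nat.card_coe_set_eq,
    ← Nat.card_prod]
  exact Nat.card_congr (Equiv.Set.prod s t)

end Aux

lemma mCount_boxProd {V W : Type*} [Fintype V] [Fintype W]
    (A : SimpleGraph V) (B : SimpleGraph W) (hA : A.Connected) (hB : B.Connected)
    (a₁ a₂ : V) (b : W) :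
    mCount (A □ B) (a₁, b) (a₂, b)
      = mCount A a₁ a₂ * Fintype.card W + nCount A a₁ a₂ * B.edgeSet.ncard := by
  classical
  have hset : {e ∈ (A □ B).edgeSet |
        edgeDist (A □ B) (a₁, b) e < edgeDist (A □ B) (a₂, b) e}
      = (fun p : Sym2 V × W => Sym2.map (fun v => (v, p.2)) p.1) ''
          ({e ∈ A.edgeSet | edgeDist A a₁ e < edgeDist A a₂ e} ×ˢ Set.univ)
      ∪ (fun p : V × Sym2 W => Sym2.map (fun u => (p.1, u)) p.2) ''
          ({w : V | A.dist w a₁ < A.dist w a₂} ×ˢ B.edgeSet) := by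
    apply Set.Subset.antisymm
    · rintro e
      induction e using Sym2.ind with
      | _ p q =>
        obtain ⟨p1, p2⟩ := p
        obtain ⟨q1, q2⟩ := q
        rintro ⟨he, hlt⟩
        rw [SimpleGraph.mem_edgeSet, boxProd_adj] at he
        rcases he with ⟨hadj, heq⟩ | ⟨hadj, heq⟩
        · dsimp only at hadj heq; subst heq
          left
          refine ⟨(s(p1, q1), p2), ⟨⟨hadj, ?_⟩, Set.mem_univ _⟩, by
            simp [Sym2.map_pair_eq]⟩
          have hrw : s((p1, p2), (q1, p2))
              = Sym2.map (fun v => (v, p2)) s(p1, q1) := by simp [Sym2.map_pair_eq]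
          rw [hrw, edgeDist_boxProd_left hA hB, edgeDist_boxProd_left hA hB] at hlt
          exact Nat.lt_of_add_lt_add_right hlt
        · dsimp only at hadj heq; subst heq
          right
          refine ⟨(p1, s(p2, q2)), ⟨?_, hadj⟩, by simp [Sym2.map_pair_eq]⟩
          have hrw : s((p1, p2), (p1, q2))
              = Sym2.map (fun u => (p1, u)) s(p2, q2) := by simp [Sym2.map_pair_eq]
          rw [hrw, edgeDist_boxProd_right hA hB, edgeDist_boxProd_right hA hB] at hlt
          have h2 := Nat.lt_of_add_lt_add_right (by
            rwa [Nat.add_comm (A.dist a₁ p1), Nat.add_comm (A.dist a₂ p1)] at hlt)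
          show A.dist p1 a₁ < A.dist p1 a₂
          rwa [show A.dist p1 a₁ = A.dist a₁ p1 from dist_comm,
            show A.dist p1 a₂ = A.dist a₂ p1 from dist_comm]
    · rintro e (⟨⟨e', w⟩, ⟨⟨heE, hlt⟩, -⟩, rfl⟩ | ⟨⟨x, f⟩, ⟨hx, hfE⟩, rfl⟩)
      · induction e' using Sym2.ind with
        | _ u v =>
          refine ⟨?_, ?_⟩
          · dsimp only
            rw [Sym2.map_pair_eq, SimpleGraph.mem_edgeSet, boxProd_adj]
            exact Or.inl ⟨heE, rfl⟩
          · dsimp only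
            rw [edgeDist_boxProd_left hA hB, edgeDist_boxProd_left hA hB]
            exact Nat.add_lt_add_right hlt _
      · induction f using Sym2.ind with
        | _ u v =>
          refine ⟨?_, ?_⟩
          · dsimp only
            rw [Sym2.map_pair_eq, SimpleGraph.mem_edgeSet, boxProd_adj]
            exact Or.inr ⟨hfE, rfl⟩
          · dsimp only
            rw [edgeDist_boxProd_right hA hB, edgeDist_boxProd_right hA hB]
            have hx' : A.dist x a₁ < A.dist x a₂ := hx
            rw [show A.dist x a₁ = A.dist a₁ x from dist_comm,
              show A.dist x a₂ = A.dist a₂ x from dist_comm] at hx'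
            exact Nat.add_lt_add_right hx' _
  have hdisj : Disjoint
      ((fun p : Sym2 V × W => Sym2.map (fun v => (v, p.2)) p.1) ''
        ({e ∈ A.edgeSet | edgeDist A a₁ e < edgeDist A a₂ e} ×ˢ Set.univ))
      ((fun p : V × Sym2 W => Sym2.map (fun u => (p.1, u)) p.2) ''
        ({w : V | A.dist w a₁ < A.dist w a₂} ×ˢ B.edgeSet)) := by
    rw [Set.disjoint_left]
    rintro e ⟨⟨e', w⟩, ⟨⟨heE, -⟩, -⟩, rfl⟩ ⟨⟨x, f⟩, ⟨-, hfE⟩, heq⟩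
    induction e' using Sym2.ind with
    | _ u v =>
      induction f using Sym2.ind with
      | _ s' t' =>
        simp only [Sym2.map_pair_eq, Sym2.eq_iff, Prod.mk.injEq] at heq
        rw [SimpleGraph.mem_edgeSet] at hfE
        rcases heq with ⟨⟨-, h2⟩, ⟨-, h4⟩⟩ | ⟨⟨-, h2⟩, ⟨-, h4⟩⟩ <;>
          · subst h2; subst h4; exact B.irrefl hfE
  rw [mCount, hset, Set.ncard_union_eq hdisj (Set.toFinite _) (Set.toFinite _),
    Set.ncard_image_of_injective _ phiA_inj, Set.ncard_image_of_injective _ phiB_inj,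
    ncard_prod', ncard_prod', Set.ncard_univ, Nat.card_eq_fintype_card]
  rfl

/-- if `A □ B` is Gt-EDB, then for every edge `a₁a₂` of `A` the
weighted counts satisfy one of the two balance equalities. -/
theorem stmt10 {V W : Type*} [Fintype V] [Fintype W]
    (A : SimpleGraph V) (B : SimpleGraph W) (t : ℕ)
    (hA : A.Connected) (hB : B.Connected)
    (hGt : GtEDB (A.boxProd B) t) :
    ∀ a₁ a₂ : V, A.Adj a₁ a₂ →
      mCount A a₁ a₂ * Fintype.card W + nCount A a₁ a₂ * B.edgeSet.ncard
        = t * (mCount A a₂ a₁ * Fintype.card W + nCount A a₂ a₁ * B.edgeSet.ncard) ∨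
      mCount A a₂ a₁ * Fintype.card W + nCount A a₂ a₁ * B.edgeSet.ncard
        = t * (mCount A a₁ a₂ * Fintype.card W + nCount A a₁ a₂ * B.edgeSet.ncard) := by
  intro a₁ a₂ h
  obtain ⟨b⟩ := hB.nonempty
  have h' : (A □ B).Adj (a₁, b) (a₂, b) := boxProd_adj_left.mpr h
  rcases hGt _ _ h' with hc | hc
  · left
    rw [← mCount_boxProd A B hA hB a₁ a₂ b, ← mCount_boxProd A B hA hB a₂ a₁ b]
    exact hc
  · right
    rw [← mCount_boxProd A B hA hB a₁ a₂ b, ← mCount_boxProd A B hA hB a₂ a₁ b]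
    exact hc
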